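/- Let G be a group, μ a character of G into ℂ\{0} with |μ(x)| = 1 for all x, δ > 0, and f, g : G → ℂ such that |f(xy) + μ(y) f(xy⁻¹) - 2 f(x) g(y)| ≤ δ for all x, y ∈ G. If f is unbounded, then g(y) = μ(y) g(y⁻¹) for all y ∈ G. -/

import Mathlib

theorem stmt_12 {G : Type*} [Group G] (μ f g : G → ℂ) (δ : ℝ) (hδ : 0 < δ)
    (hμ : ∀ x y, μ (x * y) = μ x * μ y) (hμ1 : ∀ x, ‖μ x‖ = 1)
    (hfg : ∀ x y, ‖f (x * y) + μ y * f (x * y⁻¹) - 2 * f x * g y‖ ≤ δ)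
    (hf : ¬ ∃ C : ℝ, ∀ x, ‖f x‖ ≤ C) :
    ∀ y, g y = μ y * g y⁻¹ := by
  intro y
  by_contra hne
  apply hf
  set c : ℂ := g y - μ y * g y⁻¹ with hc
  have hc0 : c ≠ 0 := sub_ne_zero.mpr hne
  have hcabs : 0 < ‖c‖ := norm_pos_iff.mpr hc0
  have hμone : μ 1 = 1 := by
    have h1 : μ 1 = μ 1 * μ 1 := by rw [← hμ]; simp
    have h0 : μ 1 ≠ 0 := by
      intro h
      have := hμ1 1
      rw [h] at this
      simp at this
    field_simp at h1
    tauto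
  have hμinv : μ y * μ y⁻¹ = 1 := by rw [← hμ]; simp [hμone]
  refine ⟨δ / ‖c‖, fun x => ?_⟩
  have h1 := hfg x y
  have h2 := hfg x y⁻¹
  rw [inv_inv] at h2
  have e : 2 * f x * c =
      (μ y * (f (x * y⁻¹) + μ y⁻¹ * f (x * y) - 2 * f x * g y⁻¹))
      - (f (x * y) + μ y * f (x * y⁻¹) - 2 * f x * g y) := by
    rw [hc]
    linear_combination (-f (x * y)) * hμinv
  have key : ‖2 * f x * c‖ ≤ 2 * δ := by
    rw [e]
    calc ‖_‖ ≤ ‖μ y * (f (x * y⁻¹) + μ y⁻¹ * f (x * y) - 2 * f x * g y⁻¹)‖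
          + ‖f (x * y) + μ y * f (x * y⁻¹) - 2 * f x * g y‖ :=
        norm_sub_le _ _
      _ ≤ 1 * δ + δ := by
          rw [norm_mul, hμ1 y]
          exact add_le_add (by simpa using h2) h1
      _ = 2 * δ := by ring
  rw [norm_mul, norm_mul, Complex.norm_two] at key
  rw [le_div_iff₀ hcabs]
  linarith
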